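/- Let R be a commutative ring, S a multiplicative subset of R, P a u-S-pseudo-projective R-module, and e an R-endomorphism of P. If the image of e is a direct summand of P, then the kernel of e is a u-S-direct summand of P; that is, there exist an R-module N' and a u-S-isomorphism between P and ker(e) ⊕ N'. -/
import Mathlib


/-!  Definitions for uniformly-S-pseudo-projective modules
(M. Adarbeh, M. Saleh, "Uniformly-S-pseudo-projective modules"). -/

universe u v w

/-- `S` is a multiplicative subset of the commutative ring `R`:
`1 ∈ S`, `0 ∉ S`, and `S` is closed under multiplication. -/
def IsMultSubset {R : Type u} [CommRing R] (S : Set R) : Prop :=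
  1 ∈ S ∧ (0 : R) ∉ S ∧ ∀ ⦃a b : R⦄, a ∈ S → b ∈ S → a * b ∈ S

/-- An `R`-module `T` is `u`-`S`-torsion if some `s ∈ S` annihilates it. -/
def IsUSTorsion {R : Type u} [CommRing R] (S : Set R) (T : Type v) [AddCommGroup T]
    [Module R T] : Prop :=
  ∃ s ∈ S, ∀ t : T, s • t = 0

/-- `f` is a `u`-`S`-monomorphism: its kernel is `u`-`S`-torsion. -/
def IsUSMono {R : Type u} [CommRing R] (S : Set R) {M : Type v} {N : Type w}
    [AddCommGroup M] [Module R M] [AddCommGroup N] [Module R N] (f : M →ₗ[R] N) : Prop :=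
  ∃ s ∈ S, ∀ m ∈ LinearMap.ker f, s • m = (0 : M)

/-- `f` is a `u`-`S`-epimorphism: its cokernel is `u`-`S`-torsion. -/
def IsUSEpi {R : Type u} [CommRing R] (S : Set R) {M : Type v} {N : Type w}
    [AddCommGroup M] [Module R M] [AddCommGroup N] [Module R N] (f : M →ₗ[R] N) : Prop :=
  ∃ s ∈ S, ∀ n : N, s • n ∈ LinearMap.range f

/-- `f` is a `u`-`S`-isomorphism: both a `u`-`S`-monomorphism and a `u`-`S`-epimorphism. -/
def IsUSIso {R : Type u} [CommRing R] (S : Set R) {M : Type v} {N : Type w}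
    [AddCommGroup M] [Module R M] [AddCommGroup N] [Module R N] (f : M →ₗ[R] N) : Prop :=
  IsUSMono S f ∧ IsUSEpi S f

/-- `P` is `u`-`S`-pseudo-projective: for every submodule `K` of `P` there is `s ∈ S` such that
every `u`-`S`-epimorphism `f : P → P/K` satisfies `s • f = π_K ∘ g` for some endomorphism
`g` of `P`. -/
def IsUSPseudoProjective {R : Type u} [CommRing R] (S : Set R) (P : Type v)
    [AddCommGroup P] [Module R P] : Prop :=
  ∀ K : Submodule R P, ∃ s ∈ S, ∀ f : P →ₗ[R] P ⧸ K, IsUSEpi S f →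
    ∃ g : P →ₗ[R] P, s • f = K.mkQ.comp g

/-- `M` is `u`-`S`-quasi-projective. -/
def IsUSQuasiProjective {R : Type u} [CommRing R] (S : Set R) (M : Type v)
    [AddCommGroup M] [Module R M] : Prop :=
  ∀ K : Submodule R M, ∃ s ∈ S, ∀ f : M →ₗ[R] M ⧸ K,
    ∃ g : M →ₗ[R] M, s • f = K.mkQ.comp g

/-- `Q` is `u`-`S`-projective (test modules in `Type v₁`). -/
def IsUSProjective.{u₁, v₁, w₁} {R : Type u₁} [CommRing R] (S : Set R) (Q : Type w₁)
    [AddCommGroup Q] [Module R Q] : Prop :=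
  ∀ (B C : Type v₁) [AddCommGroup B] [AddCommGroup C] [Module R B] [Module R C]
    (g : B →ₗ[R] C), IsUSEpi S g →
      ∃ s ∈ S, ∀ h : Q →ₗ[R] C, ∃ h' : Q →ₗ[R] B, s • h = g.comp h'

/-- `M` is `u`-`S`-injective (test modules in `Type v₁`). -/
def IsUSInjective.{u₁, v₁, w₁} {R : Type u₁} [CommRing R] (S : Set R) (M : Type w₁)
    [AddCommGroup M] [Module R M] : Prop :=
  ∀ (A B : Type v₁) [AddCommGroup A] [AddCommGroup B] [Module R A] [Module R B]
    (f : A →ₗ[R] B), IsUSMono S f →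
      ∃ s ∈ S, ∀ h : A →ₗ[R] M, ∃ h' : B →ₗ[R] M, s • h = h'.comp f

/-- `E` is `u`-`S`-pseudo-injective. -/
def IsUSPseudoInjective {R : Type u} [CommRing R] (S : Set R) (E : Type v)
    [AddCommGroup E] [Module R E] : Prop :=
  ∀ K : Submodule R E, ∃ s ∈ S, ∀ f : ↥K →ₗ[R] E, IsUSMono S f →
    ∃ g : E →ₗ[R] E, g.comp K.subtype = s • f

/-- The sequence `0 → A →f B →g C → 0` is short `u`-`S`-exact. -/
def IsShortUSExact {R : Type u} [CommRing R] (S : Set R) {A B C : Type v}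
    [AddCommGroup A] [Module R A] [AddCommGroup B] [Module R B] [AddCommGroup C] [Module R C]
    (f : A →ₗ[R] B) (g : B →ₗ[R] C) : Prop :=
  IsUSMono S f ∧ IsUSEpi S g ∧
    ∃ s ∈ S, (∀ x ∈ LinearMap.ker g, s • x ∈ LinearMap.range f) ∧
      (∀ x ∈ LinearMap.range f, s • x ∈ LinearMap.ker g)

/-- The short `u`-`S`-exact sequence `0 → A →f B →g C → 0` is `u`-`S`-split:
some multiple `s • 1_A` of the identity factors back through `f`. -/
def IsUSSplitSeq {R : Type u} [CommRing R] (S : Set R) {A B : Type v}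
    [AddCommGroup A] [Module R A] [AddCommGroup B] [Module R B] (f : A →ₗ[R] B) : Prop :=
  ∃ s ∈ S, ∃ f' : B →ₗ[R] A, f'.comp f = s • (LinearMap.id : A →ₗ[R] A)

/-- `M` is a `u`-`S`-semisimple module (test sequences with modules in `Type v₁`). -/
def IsUSSemisimpleModule.{u₁, v₁} {R : Type u₁} [CommRing R] (S : Set R) (M : Type v₁)
    [AddCommGroup M] [Module R M] : Prop :=
  ∀ (A C : Type v₁) [AddCommGroup A] [AddCommGroup C] [Module R A] [Module R C]
    (f : A →ₗ[R] M) (g : M →ₗ[R] C), IsShortUSExact S f g → IsUSSplitSeq S f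

/-- `R` is a `u`-`S`-semisimple ring: every free `R`-module is `u`-`S`-semisimple. -/
def IsUSSemisimpleRing.{u₁, v₁} {R : Type u₁} [CommRing R] (S : Set R) : Prop :=
  ∀ (F : Type v₁) [AddCommGroup F] [Module R F], Module.Free R F →
    IsUSSemisimpleModule.{u₁, v₁} S F

/-- A submodule `N` of `M` is a `u`-`S`-direct summand of `M` if there is an `R`-module `N'`
and a `u`-`S`-isomorphism between `M` and `N ⊕ N'`. -/
def IsUSDirectSummand {R : Type u} [CommRing R] (S : Set R) {M : Type v}
    [AddCommGroup M] [Module R M] (N : Submodule R M) : Prop :=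
  ∃ (N' : ModuleCat.{v} R) (h : M →ₗ[R] (↥N × ↥N')), IsUSIso S h

/-- `A` is `u`-`S`-projective relative to `B`. -/
def IsUSProjectiveRel {R : Type u} [CommRing R] (S : Set R) (A : Type v) (B : Type w)
    [AddCommGroup A] [Module R A] [AddCommGroup B] [Module R B] : Prop :=
  ∀ K : Submodule R B, ∃ s ∈ S, ∀ f : A →ₗ[R] B ⧸ K,
    ∃ h : A →ₗ[R] B, s • f = K.mkQ.comp h

/-- If `P` is `u`-`S`-pseudo-projective and `e` is an endomorphism of `P` whose image is a
direct summand of `P`, then `ker e` is a `u`-`S`-direct summand of `P`. -/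
theorem uSDirectSummand_ker_of_range_directSummand
    {R : Type u} [CommRing R] (S : Set R) (hS : IsMultSubset S)
    {P : Type v} [AddCommGroup P] [Module R P] (hP : IsUSPseudoProjective S P)
    (e : P →ₗ[R] P) (h : ∃ A' : Submodule R P, IsCompl (LinearMap.range e) A') :
    IsUSDirectSummand S (LinearMap.ker e) := by
  classical
  obtain ⟨A', hA⟩ := h
  set K := LinearMap.ker e with hK
  let p : P →ₗ[R] ↥(LinearMap.range e) := Submodule.linearProjOfIsCompl _ A' hA
  let q : (P ⧸ K) ≃ₗ[R] ↥(LinearMap.range e) := LinearMap.quotKerEquivRange e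
  let f : P →ₗ[R] P ⧸ K := q.symm.toLinearMap.comp p
  have hfe : ∀ x : P, f (e x) = Submodule.Quotient.mk x := by
    intro x
    have hp : p (e x) = ⟨e x, LinearMap.mem_range_self e x⟩ :=
      Submodule.linearProjOfIsCompl_apply_left hA ⟨e x, LinearMap.mem_range_self e x⟩
    show q.symm (p (e x)) = Submodule.Quotient.mk x
    rw [hp, LinearEquiv.symm_apply_eq]
    exact Subtype.ext (LinearMap.quotKerEquivRange_apply_mk e x).symm
  have hfepi : IsUSEpi S f := by
    refine ⟨1, hS.1, fun n => ?_⟩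
    obtain ⟨x, rfl⟩ := Submodule.Quotient.mk_surjective K n
    rw [one_smul]
    exact ⟨e x, hfe x⟩
  obtain ⟨s, hsS, hs⟩ := hP K
  obtain ⟨g, hg⟩ := hs f hfepi
  have hge : ∀ x : P, e (g (e x)) = s • e x := by
    intro x
    have h1 : (s • f) (e x) = K.mkQ (g (e x)) := by rw [hg]; rfl
    have h2 : (Submodule.Quotient.mk (g (e x)) : P ⧸ K) = Submodule.Quotient.mk (s • x : P) := by
      rw [← Submodule.mkQ_apply, ← h1, LinearMap.smul_apply, hfe x,
        ← Submodule.Quotient.mk_smul]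
    have h3 : g (e x) - s • x ∈ K := by
      rwa [Submodule.Quotient.eq] at h2
    have h4 : e (g (e x) - s • x) = 0 := h3
    rw [map_sub, map_smul, sub_eq_zero] at h4
    exact h4
  have hmem : ∀ x : P, (s • (LinearMap.id : P →ₗ[R] P) - g.comp e) x ∈ K := by
    intro x
    show e (s • x - g (e x)) = 0
    rw [map_sub, map_smul, hge x, sub_self]
  let h1 : P →ₗ[R] ↥K := LinearMap.codRestrict K (s • LinearMap.id - g.comp e) hmem
  let hmap : P →ₗ[R] ↥K × ↥(LinearMap.range e) := h1.prod e.rangeRestrict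
  refine ⟨ModuleCat.of R ↥(LinearMap.range e), hmap, ?_, ?_⟩
  · refine ⟨s, hsS, fun m hm => ?_⟩
    have hm' : hmap m = 0 := hm
    have hfst : (h1 m : P) = 0 := by
      have := congrArg Prod.fst hm'
      exact congrArg Subtype.val this
    have hsnd : e m = 0 := by
      have := congrArg Prod.snd hm'
      exact congrArg Subtype.val this
    have : s • m - g (e m) = 0 := hfst
    rw [hsnd, map_zero, sub_zero] at this
    exact this
  · refine ⟨s, hsS, fun n => ?_⟩
    obtain ⟨k, y⟩ := n
    obtain ⟨x, hx⟩ := y.2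
    have hek : e (k : P) = 0 := k.2
    refine ⟨(k : P) + g (e x), ?_⟩
    have hez : e ((k : P) + g (e x)) = s • e x := by
      rw [map_add, hek, zero_add, hge x]
    refine Prod.ext (Subtype.ext ?_) (Subtype.ext ?_)
    · show s • ((k : P) + g (e x)) - g (e ((k : P) + g (e x))) = s • (k : P)
      rw [hez, map_smul, smul_add, add_sub_assoc, sub_self, add_zero]
    · show e ((k : P) + g (e x)) = _
      rw [hez, hx]
      rfl
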